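/- Let k ≥ 1 be an integer, s > 1, and C > 0. There exists δ > 0, depending only on k, s, and C, with the following property: for every Borel probability measure μ on ℝ² supported in the annulus {x ∈ ℝ² : 1/2 ≤ ‖x‖ ≤ 1} and satisfying μ(B(x,r)) ≤ C r^s for all x ∈ ℝ² and r > 0, there exist Borel sets E₁,…,E_{k+1} ⊂ ℝ² with μ(E_i) > 0 for every i, such that for all i ≠ j and all x ∈ E_i, y ∈ E_j one has |x·y^⊥| ≥ δ. -/

import Mathlib

open MeasureTheory Real
open scoped ENNReal

noncomputable section

/-- The plane `ℝ²` with the Euclidean norm. -/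
abbrev Plane : Type := EuclideanSpace ℝ (Fin 2)

/-- The point `(a, b) ∈ ℝ²`. -/
def e2 (a b : ℝ) : Plane := (WithLp.equiv 2 (Fin 2 → ℝ)).symm ![a, b]

/-- The signed area `x · y^⊥`, where `y^⊥ = (−y₂, y₁)`. -/
def sarea (x y : Plane) : ℝ := x 0 * (-(y 1)) + x 1 * y 0

/-- The action of `SL₂(ℝ)` on `ℝ²` by matrix-vector multiplication. -/
def SL2act (g : Matrix.SpecialLinearGroup (Fin 2) ℝ) (v : Plane) : Plane :=
  (WithLp.equiv 2 (Fin 2 → ℝ)).symm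
    (Matrix.mulVec (g : Matrix (Fin 2) (Fin 2) ℝ) ((WithLp.equiv 2 (Fin 2 → ℝ)) v))

def u1f (x : Plane) : ℝ := ((x 0)^2 - (x 1)^2) / ((x 0)^2 + (x 1)^2)
def u2f (x : Plane) : ℝ := (2 * x 0 * x 1) / ((x 0)^2 + (x 1)^2)

lemma norm_sq_eq' (x : Plane) : ‖x‖^2 = (x 0)^2 + (x 1)^2 := by
  rw [EuclideanSpace.norm_eq, Real.sq_sqrt (by positivity)]
  simp [Fin.sum_univ_two, sq_abs]

lemma annulus_bounds {x : Plane} (h1 : 1/2 ≤ ‖x‖) (h2 : ‖x‖ ≤ 1) :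
    1/4 ≤ (x 0)^2 + (x 1)^2 ∧ (x 0)^2 + (x 1)^2 ≤ 1 := by
  have h := norm_sq_eq' x
  constructor <;> nlinarith [norm_nonneg x]

lemma u1f_abs_le {x : Plane} (h1 : 1/2 ≤ ‖x‖) (h2 : ‖x‖ ≤ 1) : |u1f x| ≤ 1 := by
  have h := (annulus_bounds h1 h2).1
  rw [u1f, abs_div, abs_of_pos (show (0:ℝ) < (x 0)^2 + (x 1)^2 by linarith),
    div_le_one (by linarith), abs_le]
  constructor <;> nlinarith [sq_nonneg (x 0), sq_nonneg (x 1)]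

lemma u2f_abs_le {x : Plane} (h1 : 1/2 ≤ ‖x‖) (h2 : ‖x‖ ≤ 1) : |u2f x| ≤ 1 := by
  have h := (annulus_bounds h1 h2).1
  rw [u2f, abs_div, abs_of_pos (show (0:ℝ) < (x 0)^2 + (x 1)^2 by linarith),
    div_le_one (by linarith), abs_le]
  constructor <;> nlinarith [sq_nonneg (x 0 + x 1), sq_nonneg (x 0 - x 1)]

lemma key_id (a b c d : ℝ) (h1 : a^2+b^2 ≠ 0) (h2 : c^2+d^2 ≠ 0) :
    ((a^2-b^2)/(a^2+b^2) - (c^2-d^2)/(c^2+d^2))^2 + (2*a*b/(a^2+b^2) - 2*c*d/(c^2+d^2))^2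
      = 4*(b*c - a*d)^2 / ((a^2+b^2)*(c^2+d^2)) := by
  field_simp; ring

lemma sarea_id {x y : Plane} (hx1 : 1/2 ≤ ‖x‖) (hx2 : ‖x‖ ≤ 1)
    (hy1 : 1/2 ≤ ‖y‖) (hy2 : ‖y‖ ≤ 1) :
    4*(sarea x y)^2 = ((u1f x - u1f y)^2 + (u2f x - u2f y)^2)
      * (((x 0)^2+(x 1)^2) * ((y 0)^2+(y 1)^2)) := by
  have hnx := (annulus_bounds hx1 hx2).1
  have hny := (annulus_bounds hy1 hy2).1
  have h1 : (x 0)^2+(x 1)^2 ≠ 0 := by linarith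
  have h2 : (y 0)^2+(y 1)^2 ≠ 0 := by linarith
  have hkey := key_id (x 0) (x 1) (y 0) (y 1) h1 h2
  rw [u1f, u2f, u1f, u2f, sarea, hkey]
  field_simp
  ring


lemma real_small {e A B NX NY S : ℝ} (he : 0 < e)
    (hId : 4*S^2 = (A^2+B^2)*(NX*NY)) (hA : A^2 ≤ e^2) (hB : B^2 ≤ e^2)
    (hNX : 1/4 ≤ NX) (hNX1 : NX ≤ 1) (hNY : 1/4 ≤ NY) (hNY1 : NY ≤ 1) :
    |S| ≤ e := by
  have hxy : NX*NY ≤ 1 := by nlinarith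
  have hxy0 : (0:ℝ) ≤ NX*NY := by nlinarith
  have hP : (A^2+B^2)*(NX*NY) ≤ (2*e^2)*1 := mul_le_mul (by linarith) hxy hxy0 (by positivity)
  have hS2 : S^2 ≤ e^2 := by nlinarith [hP, hId]
  have := Real.sqrt_le_sqrt hS2
  rwa [Real.sqrt_sq_eq_abs, Real.sqrt_sq he.le] at this

lemma real_big {e A B NX NY S : ℝ} (he : 0 < e)
    (hId : 4*S^2 = (A^2+B^2)*(NX*NY)) (hD : e^2 ≤ A^2+B^2)
    (hNX : 1/4 ≤ NX) (hNX1 : NX ≤ 1) (hNY : 1/4 ≤ NY) (hNY1 : NY ≤ 1) :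
    e/8 ≤ |S| := by
  have h16 : (1:ℝ)/16 ≤ NX*NY := by nlinarith
  have hP : e^2*(1/16) ≤ (A^2+B^2)*(NX*NY) :=
    mul_le_mul hD h16 (by norm_num) (by positivity)
  have h4 : (e/8)^2 ≤ S^2 := by nlinarith [hP, hId]
  have := Real.sqrt_le_sqrt h4
  rwa [Real.sqrt_sq (by positivity), Real.sqrt_sq_eq_abs] at this

lemma real_cauchy {a b v0 v1 : ℝ} (hv : v0^2+v1^2 = 1) (hn : a^2+b^2 ≤ 1) :
    (a*v0+b*v1)^2 ≤ 1 := by nlinarith [sq_nonneg (a*v1 - b*v0)]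

lemma perp_id {x0 x1 v0 v1 a : ℝ} (hv : v0^2+v1^2 = 1) (ha : a = x0*v0+x1*v1) :
    (x0 - a*v0)^2 + (x1 - a*v1)^2 = (x0*(-v1) + x1*v0)^2 := by
  subst ha
  linear_combination ((x0*v0+x1*v1)^2 - x0^2 - x1^2) * hv

lemma norm_le_of_sq {n S c : ℝ} (hn : 0 ≤ n) (h : n^2 = S^2) (hS : |S| ≤ c) : n ≤ c := by
  nlinarith [sq_abs S, abs_nonneg S]

lemma sarea_small {η : ℝ} (hη : 0 < η) {x y : Plane}
    (hx1 : 1/2 ≤ ‖x‖) (hx2 : ‖x‖ ≤ 1) (hy1 : 1/2 ≤ ‖y‖) (hy2 : ‖y‖ ≤ 1)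
    (hd1 : |u1f x - u1f y| < η) (hd2 : |u2f x - u2f y| < η) : |sarea x y| ≤ η := by
  have hId := sarea_id hx1 hx2 hy1 hy2
  have hb1 := annulus_bounds hx1 hx2
  have hb2 := annulus_bounds hy1 hy2
  have hs1 : (u1f x - u1f y)^2 ≤ η^2 := by
    nlinarith [sq_abs (u1f x - u1f y), abs_nonneg (u1f x - u1f y)]
  have hs2 : (u2f x - u2f y)^2 ≤ η^2 := by
    nlinarith [sq_abs (u2f x - u2f y), abs_nonneg (u2f x - u2f y)]
  exact real_small hη hId hs1 hs2 hb1.1 hb1.2 hb2.1 hb2.2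

lemma sarea_big {η : ℝ} (hη : 0 < η) {x y : Plane}
    (hx1 : 1/2 ≤ ‖x‖) (hx2 : ‖x‖ ≤ 1) (hy1 : 1/2 ≤ ‖y‖) (hy2 : ‖y‖ ≤ 1)
    (hd : η ≤ |u1f x - u1f y| ∨ η ≤ |u2f x - u2f y|) : η/8 ≤ |sarea x y| := by
  have hId := sarea_id hx1 hx2 hy1 hy2
  have hb1 := annulus_bounds hx1 hx2
  have hb2 := annulus_bounds hy1 hy2
  have hΔ : η^2 ≤ (u1f x - u1f y)^2 + (u2f x - u2f y)^2 := by
    rcases hd with h | h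
    · nlinarith [sq_abs (u1f x - u1f y), sq_nonneg (u2f x - u2f y), hη.le]
    · nlinarith [sq_abs (u2f x - u2f y), sq_nonneg (u1f x - u1f y), hη.le]
  exact real_big hη hId hΔ hb1.1 hb1.2 hb2.1 hb2.2

set_option maxHeartbeats 1600000 in
lemma cell_cover {η : ℝ} (hη : 0 < η) {S : Set Plane}
    (hSann : ∀ x ∈ S, 1/2 ≤ ‖x‖ ∧ ‖x‖ ≤ 1)
    (hSpair : ∀ x ∈ S, ∀ y ∈ S, |sarea x y| ≤ η) :
    ∃ c : ℕ → Plane,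
      S ⊆ ⋃ j ∈ Finset.range (⌈1/η⌉₊ + 1), Metric.closedBall (c j) (3*η) := by
  rcases Set.eq_empty_or_nonempty S with he | ⟨x0, hx0⟩
  · exact ⟨fun _ => 0, by simp [he]⟩
  have hx0a := hSann x0 hx0
  have hx0n : (1:ℝ)/2 ≤ ‖x0‖ := hx0a.1
  have hx0pos : (0:ℝ) < ‖x0‖ := by linarith
  obtain ⟨v, hvdef⟩ : ∃ v : Plane, v = ‖x0‖⁻¹ • x0 := ⟨_, rfl⟩
  have hvi : ∀ i, v i = ‖x0‖⁻¹ * x0 i := fun i => by rw [hvdef]; rfl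
  have hnv : ‖v‖ = 1 := by
    rw [hvdef, norm_smul, norm_inv, norm_norm, inv_mul_cancel₀ hx0pos.ne']
  have hv1 : (v 0)^2 + (v 1)^2 = 1 := by
    have h := norm_sq_eq' v
    rw [hnv] at h
    linarith [h.symm]
  refine ⟨fun j => (-1 + (2*(j:ℝ)+1)*η) • v, ?_⟩
  intro x hx
  have hxa := hSann x hx
  have hnxb := annulus_bounds hxa.1 hxa.2
  obtain ⟨α, hαdef⟩ : ∃ a : ℝ, a = x 0 * v 0 + x 1 * v 1 := ⟨_, rfl⟩
  have hα2 : α^2 ≤ 1 := by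
    rw [hαdef]
    exact real_cauchy hv1 hnxb.2
  have hα1 : |α| ≤ 1 := by
    rw [abs_le]
    constructor <;> nlinarith [hα2]
  have hperp : ‖x - α • v‖^2 = (sarea x v)^2 := by
    rw [norm_sq_eq']
    have h0 : (x - α • v) 0 = x 0 - α * v 0 := rfl
    have h1 : (x - α • v) 1 = x 1 - α * v 1 := rfl
    rw [h0, h1, sarea]
    exact perp_id hv1 hαdef
  have hsv : |sarea x v| ≤ 2*η := by
    have h1 : sarea x v = ‖x0‖⁻¹ * sarea x x0 := by
      rw [sarea, sarea, hvi 0, hvi 1]; ring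
    have h2 : |sarea x x0| ≤ η := hSpair x hx x0 hx0
    have h3 : ‖x0‖⁻¹ ≤ 2 := by
      rw [show (2:ℝ) = (1/2)⁻¹ by norm_num]
      exact inv_anti₀ (by norm_num) hx0n
    rw [h1, abs_mul, abs_of_pos (inv_pos.mpr hx0pos)]
    exact mul_le_mul h3 h2 (abs_nonneg _) (by norm_num)
  have hxαv : ‖x - α • v‖ ≤ 2*η := norm_le_of_sq (norm_nonneg _) hperp hsv
  obtain ⟨t, htdef⟩ : ∃ t : ℝ, t = (α + 1)/(2*η) := ⟨_, rfl⟩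
  have ht0 : 0 ≤ t := by
    rw [htdef]
    apply div_nonneg _ (by positivity)
    nlinarith [abs_le.mp hα1]
  obtain ⟨j, hjdef⟩ : ∃ j : ℕ, j = ⌊t⌋₊ := ⟨_, rfl⟩
  have hjt : (j:ℝ) ≤ t := by rw [hjdef]; exact Nat.floor_le ht0
  have htj : t < j + 1 := by rw [hjdef]; exact Nat.lt_floor_add_one t
  have hjM : j ∈ Finset.range (⌈1/η⌉₊ + 1) := by
    rw [Finset.mem_range]
    have ht1 : t ≤ 1/η := by
      rw [htdef, div_le_div_iff₀ (by positivity) hη]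
      nlinarith [abs_le.mp hα1, hη]
    have hc1 : (j:ℝ) ≤ (⌈1/η⌉₊:ℝ) := (hjt.trans ht1).trans (Nat.le_ceil _)
    have hc2 : j ≤ ⌈1/η⌉₊ := Nat.cast_le.mp hc1
    omega
  have hαc : |α - (-1 + (2*(j:ℝ)+1)*η)| ≤ η := by
    have hαt : α = 2*η*t - 1 := by rw [htdef]; field_simp; ring
    rw [abs_le, hαt]
    constructor <;> nlinarith [hjt, htj, hη]
  refine Set.mem_biUnion hjM ?_
  rw [Metric.mem_closedBall, dist_eq_norm]
  have hx_split : x - (-1 + (2*(j:ℝ)+1)*η) • v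
      = (x - α • v) + ((α - (-1 + (2*(j:ℝ)+1)*η)) • v) := by
    rw [sub_smul]; abel
  rw [hx_split]
  have htri := norm_add_le (x - α • v) ((α - (-1 + (2*(j:ℝ)+1)*η)) • v)
  have hn2 : ‖(α - (-1 + (2*(j:ℝ)+1)*η)) • v‖ ≤ η := by
    rw [norm_smul, hnv, mul_one, Real.norm_eq_abs]
    exact hαc
  linarith

lemma cover_arith {s C εr E0 η : ℝ} (hs' : 0 < s - 1) (hC : 0 < C) (hεr : 0 < εr)
    (hE0 : E0 = εr / (3*C*(3:ℝ)^s)) (hη : 0 < η) (hη1 : η ≤ 1) (hηE : η^(s-1) ≤ E0) :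
    ((⌈1/η⌉₊ + 1 : ℕ):ℝ) * (C*(3*η)^s) ≤ εr := by
  have h3s : (0:ℝ) < (3:ℝ)^s := Real.rpow_pos_of_pos (by norm_num) s
  have hη1s : (0:ℝ) < η^(s-1) := Real.rpow_pos_of_pos hη _
  have hM3 : ((⌈1/η⌉₊ + 1 : ℕ):ℝ) * η ≤ 3 := by
    have h1 : (⌈1/η⌉₊:ℝ) < 1/η + 1 := Nat.ceil_lt_add_one (by positivity)
    have h2 : ((⌈1/η⌉₊ + 1 : ℕ):ℝ) ≤ 1/η + 2 := by push_cast; linarith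
    have h3 : (1/η + 2) * η = 1 + 2*η := by field_simp
    nlinarith [hη, hη1]
  have h3η : (3*η)^s = 3^s * (η^(s-1) * η) := by
    rw [Real.mul_rpow (by norm_num) hη.le]
    congr 1
    have h : η^(s-1) * η^(1:ℝ) = η^s := by
      rw [← Real.rpow_add hη]; norm_num
    rw [Real.rpow_one] at h
    exact h.symm
  have hεeq : 3 * (C * ((3:ℝ)^s * E0)) = εr := by
    rw [hE0]; field_simp
  have hfin : (((⌈1/η⌉₊ + 1 : ℕ):ℝ)*η) * (C*((3:ℝ)^s*η^(s-1)))
      ≤ 3 * (C*((3:ℝ)^s*E0)) := by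
    apply mul_le_mul hM3 _ (by positivity) (by norm_num)
    apply mul_le_mul_of_nonneg_left _ hC.le
    exact mul_le_mul_of_nonneg_left hηE h3s.le
  have hgoal : ((⌈1/η⌉₊ + 1 : ℕ):ℝ) * (C*(3*η)^s)
      = (((⌈1/η⌉₊ + 1 : ℕ):ℝ)*η) * (C*((3:ℝ)^s*η^(s-1))) := by
    rw [h3η]; ring
  rw [hgoal]
  linarith [hfin, hεeq]

lemma floor_close {r a b : ℝ} (hr : 0 < r) (h : ⌊a/r⌋ = ⌊b/r⌋) : |a - b| < r := by
  have h1 := Int.floor_le (a/r)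
  have h2 := Int.lt_floor_add_one (a/r)
  have h3 := Int.floor_le (b/r)
  have h4 := Int.lt_floor_add_one (b/r)
  rw [h] at h1 h2
  rw [abs_lt]
  constructor
  · have h5 : (b - a)/r < 1 := by rw [sub_div]; linarith
    have := (div_lt_one hr).mp h5; linarith
  · have h5 : (a - b)/r < 1 := by rw [sub_div]; linarith
    exact (div_lt_one hr).mp h5

lemma floor_far {r a b : ℝ} (hr : 0 < r) {p q : ℤ} (ha : ⌊a/r⌋ = p) (hb : ⌊b/r⌋ = q)
    (h : 2 ≤ |p - q|) : r ≤ |a - b| := by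
  have h1 := Int.floor_le (a/r)
  have h2 := Int.lt_floor_add_one (a/r)
  have h3 := Int.floor_le (b/r)
  have h4 := Int.lt_floor_add_one (b/r)
  rw [ha] at h1 h2; rw [hb] at h3 h4
  rcases le_abs.mp h with hpq | hpq
  · have hc : (q:ℝ) + 2 ≤ (p:ℝ) := by exact_mod_cast by linarith
    have h5 : 1 ≤ (a - b)/r := by rw [sub_div]; linarith
    have h6 := (one_le_div hr).mp h5
    have h7 : a - b ≤ |a - b| := le_abs_self _
    linarith
  · have hc : (p:ℝ) + 2 ≤ (q:ℝ) := by exact_mod_cast by linarith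
    have h5 : 1 ≤ (b - a)/r := by rw [sub_div]; linarith
    have h6 := (one_le_div hr).mp h5
    have h7 : b - a ≤ |a - b| := by rw [abs_sub_comm]; exact le_abs_self _
    linarith

lemma u1f_measurable : Measurable u1f := by
  have hm0 : Measurable fun x : Plane => x 0 := (EuclideanSpace.proj (0:Fin 2)).continuous.measurable
  have hm1 : Measurable fun x : Plane => x 1 := (EuclideanSpace.proj (1:Fin 2)).continuous.measurable
  exact ((hm0.pow_const 2).sub (hm1.pow_const 2)).div ((hm0.pow_const 2).add (hm1.pow_const 2))

lemma u2f_measurable : Measurable u2f := by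
  have hm0 : Measurable fun x : Plane => x 0 := (EuclideanSpace.proj (0:Fin 2)).continuous.measurable
  have hm1 : Measurable fun x : Plane => x 1 := (EuclideanSpace.proj (1:Fin 2)).continuous.measurable
  exact ((hm0.const_mul 2).mul hm1).div ((hm0.pow_const 2).add (hm1.pow_const 2))

lemma greedy {X : Type*} [MeasurableSpace X] (μ : Measure X) (F : ℤ × ℤ → Set X)
    (P : Finset (ℤ × ℤ)) (ε : ℝ≥0∞) (hF : ∀ p, μ (F p) ≤ ε)
    (hcov : 1 ≤ μ (⋃ p ∈ P, F p)) :
    ∀ n : ℕ, (9 * n * ε < 1) →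
      ∃ c : Fin n → ℤ × ℤ, (∀ i, 0 < μ (F (c i))) ∧
        (∀ i j, i ≠ j → 2 ≤ |(c i).1 - (c j).1| ∨ 2 ≤ |(c i).2 - (c j).2|) := by
  classical
  intro n
  induction n with
  | zero => intro _; exact ⟨Fin.elim0, fun i => i.elim0, fun i => i.elim0⟩
  | succ n ih =>
    intro hn
    have hn' : 9 * (n:ℝ≥0∞) * ε < 1 := lt_of_le_of_lt (by gcongr <;> simp) hn
    obtain ⟨c, hpos, hfar⟩ := ih hn'
    set T : Finset (ℤ × ℤ) :=
      P.filter (fun p => ∃ i : Fin n, |p.1 - (c i).1| ≤ 1 ∧ |p.2 - (c i).2| ≤ 1) with hT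
    have hTsub : T ⊆ Finset.univ.biUnion (fun i : Fin n =>
        Finset.Icc ((c i).1 - 1) ((c i).1 + 1) ×ˢ Finset.Icc ((c i).2 - 1) ((c i).2 + 1)) := by
      intro p hp
      rw [hT, Finset.mem_filter] at hp
      obtain ⟨-, i, h1, h2⟩ := hp
      rw [abs_le] at h1 h2
      refine Finset.mem_biUnion.mpr ⟨i, Finset.mem_univ _, ?_⟩
      rw [Finset.mem_product, Finset.mem_Icc, Finset.mem_Icc]
      omega
    have hTcard : T.card ≤ 9 * n := by
      calc T.card ≤ _ := Finset.card_le_card hTsub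
      _ ≤ ∑ i : Fin n, ((Finset.Icc ((c i).1 - 1) ((c i).1 + 1) ×ˢ
          Finset.Icc ((c i).2 - 1) ((c i).2 + 1)).card) := Finset.card_biUnion_le
      _ ≤ ∑ _i : Fin n, 9 := by
        apply Finset.sum_le_sum
        intro i _
        have h3 : ∀ z : ℤ, (z + 1 + 1 - (z - 1)).toNat = 3 := fun z => by omega
        rw [Finset.card_product, Int.card_Icc, Int.card_Icc, h3, h3]
      _ = 9 * n := by simp [mul_comm]
    have hTmeas : μ (⋃ p ∈ T, F p) < 1 := by
      calc μ (⋃ p ∈ T, F p) ≤ ∑ p ∈ T, μ (F p) := measure_biUnion_finset_le _ _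
      _ ≤ ∑ _p ∈ T, ε := Finset.sum_le_sum (fun p _ => hF p)
      _ = T.card * ε := by rw [Finset.sum_const, nsmul_eq_mul]
      _ ≤ (9 * n : ℕ) * ε := mul_le_mul_left (by exact_mod_cast hTcard) ε
      _ = 9 * (n:ℝ≥0∞) * ε := by push_cast; ring
      _ < 1 := hn'
    have hrest : 0 < μ (⋃ p ∈ P \ T, F p) := by
      by_contra hz
      push_neg at hz
      have hz0 : μ (⋃ p ∈ P \ T, F p) = 0 := le_antisymm hz zero_le
      have hsplit : μ (⋃ p ∈ P, F p) ≤ μ (⋃ p ∈ T, F p) + μ (⋃ p ∈ P \ T, F p) := by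
        refine le_trans (measure_mono ?_) (measure_union_le _ _)
        intro x hx
        rw [Set.mem_iUnion₂] at hx
        obtain ⟨p, hpP, hxp⟩ := hx
        by_cases hpT : p ∈ T
        · exact Or.inl (Set.mem_biUnion hpT hxp)
        · exact Or.inr (Set.mem_biUnion (Finset.mem_sdiff.mpr ⟨hpP, hpT⟩) hxp)
      rw [hz0, add_zero] at hsplit
      exact absurd (le_trans hcov hsplit) (not_le.mpr hTmeas)
    have hex : ∃ p ∈ P \ T, 0 < μ (F p) := by
      by_contra hz
      push_neg at hz
      have : μ (⋃ p ∈ P \ T, F p) = 0 := by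
        refine le_antisymm ?_ zero_le
        calc μ (⋃ p ∈ P \ T, F p) ≤ ∑ p ∈ P \ T, μ (F p) := measure_biUnion_finset_le _ _
        _ = 0 := Finset.sum_eq_zero (fun p hp => le_antisymm (hz p hp) zero_le)
      exact absurd this (ne_of_gt hrest)
    obtain ⟨p, hpPT, hppos⟩ := hex
    have hpT : p ∉ T := (Finset.mem_sdiff.mp hpPT).2
    have hpfar : ∀ i : Fin n, 2 ≤ |p.1 - (c i).1| ∨ 2 ≤ |p.2 - (c i).2| := by
      intro i
      rw [hT, Finset.mem_filter] at hpT
      push_neg at hpT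
      have := hpT (Finset.mem_sdiff.mp hpPT).1 i
      omega
    refine ⟨Fin.snoc c p, ?_, ?_⟩
    · intro i
      induction i using Fin.lastCases with
      | last => simpa using hppos
      | cast i => simpa using hpos i
    · intro i j hij
      induction i using Fin.lastCases with
      | last =>
        induction j using Fin.lastCases with
        | last => exact absurd rfl hij
        | cast j => simpa using hpfar j
      | cast i =>
        induction j using Fin.lastCases with
        | last =>
          have := hpfar i
          simp only [Fin.snoc_castSucc, Fin.snoc_last]
          rcases this with h | h
          · left; rwa [abs_sub_comm] at h
          · right; rwa [abs_sub_comm] at h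
        | cast j =>
          have hij' : i ≠ j := fun h => hij (by rw [h])
          simpa using hfar i j hij'

set_option maxHeartbeats 1000000 in
theorem statement9 (k : ℕ) (hk : 1 ≤ k) (s C : ℝ) (hs : 1 < s) (hC : 0 < C) :
    ∃ δ : ℝ, 0 < δ ∧
      ∀ μ : Measure Plane, IsProbabilityMeasure μ →
        μ {x : Plane | ¬(1 / 2 ≤ ‖x‖ ∧ ‖x‖ ≤ 1)} = 0 →
        (∀ (x : Plane) (r : ℝ), 0 < r →
          μ (Metric.closedBall x r) ≤ ENNReal.ofReal (C * r ^ s)) →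
        ∃ E : Fin (k + 1) → Set Plane,
          (∀ i, MeasurableSet (E i)) ∧ (∀ i, 0 < μ (E i)) ∧
          ∀ i j, i ≠ j → ∀ x ∈ E i, ∀ y ∈ E j, δ ≤ |sarea x y| := by
  classical
  have hs' : (0:ℝ) < s - 1 := by linarith
  have h3s : (0:ℝ) < (3:ℝ) ^ s := Real.rpow_pos_of_pos (by norm_num) s
  obtain ⟨εr, hεrdef⟩ : ∃ e : ℝ, e = 1 / (10 * ((k:ℝ)+1)) := ⟨_, rfl⟩
  have hεr : 0 < εr := by rw [hεrdef]; positivity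
  obtain ⟨E0, hE0⟩ : ∃ e : ℝ, e = εr / (3 * C * (3:ℝ)^s) := ⟨_, rfl⟩
  have hE0pos : 0 < E0 := by rw [hE0]; positivity
  obtain ⟨η, hηdef⟩ : ∃ e : ℝ, e = min 1 (E0 ^ (1/(s-1))) := ⟨_, rfl⟩
  have hηpos : 0 < η := by
    rw [hηdef]; exact lt_min one_pos (Real.rpow_pos_of_pos hE0pos _)
  have hη1 : η ≤ 1 := by rw [hηdef]; exact min_le_left _ _
  have hηE : η ^ (s-1) ≤ E0 := by
    have h1 : η ≤ E0^(1/(s-1)) := by rw [hηdef]; exact min_le_right _ _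
    have h2 : η^(s-1) ≤ (E0^(1/(s-1)))^(s-1) := Real.rpow_le_rpow hηpos.le h1 hs'.le
    have h3 : (E0^(1/(s-1)))^(s-1) = E0 := by
      rw [← Real.rpow_mul hE0pos.le, one_div, inv_mul_cancel₀ hs'.ne', Real.rpow_one]
    exact le_of_le_of_eq h2 h3
  refine ⟨η/8, by positivity, ?_⟩
  intro μ hprob hsupp hfrost
  have hAmeas : MeasurableSet {x : Plane | 1/2 ≤ ‖x‖ ∧ ‖x‖ ≤ 1} := by
    have h : {x : Plane | 1/2 ≤ ‖x‖ ∧ ‖x‖ ≤ 1}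
        = (fun x : Plane => ‖x‖) ⁻¹' (Set.Icc (1/2) 1) := by
      ext x; simp [Set.mem_Icc]
    rw [h]; exact continuous_norm.measurable measurableSet_Icc
  have hμA : μ {x : Plane | 1/2 ≤ ‖x‖ ∧ ‖x‖ ≤ 1} = 1 := by
    have h1 := measure_add_measure_compl (μ := μ) hAmeas
    rw [measure_univ] at h1
    have h2 : μ {x : Plane | 1/2 ≤ ‖x‖ ∧ ‖x‖ ≤ 1}ᶜ = 0 := by
      rw [Set.compl_setOf]; exact hsupp
    rw [h2, add_zero] at h1; exact h1
  obtain ⟨F, hFdef⟩ : ∃ F : ℤ × ℤ → Set Plane, F = fun p =>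
      {x : Plane | (1/2 ≤ ‖x‖ ∧ ‖x‖ ≤ 1) ∧ ⌊u1f x / η⌋ = p.1 ∧ ⌊u2f x / η⌋ = p.2} :=
    ⟨_, rfl⟩
  have hFmem : ∀ p x, x ∈ F p ↔
      ((1/2 ≤ ‖x‖ ∧ ‖x‖ ≤ 1) ∧ ⌊u1f x / η⌋ = p.1 ∧ ⌊u2f x / η⌋ = p.2) := by
    intro p x; rw [hFdef]; exact Iff.rfl
  have hFmeas : ∀ p, MeasurableSet (F p) := by
    intro p
    rw [hFdef]
    have hq : MeasurableSet {x : Plane | ⌊u1f x / η⌋ = p.1} :=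
      (u1f_measurable.div_const η).floor (measurableSet_singleton p.1)
    have hr : MeasurableSet {x : Plane | ⌊u2f x / η⌋ = p.2} :=
      (u2f_measurable.div_const η).floor (measurableSet_singleton p.2)
    exact hAmeas.inter (hq.inter hr)
  have hclose : ∀ p : ℤ × ℤ, ∀ x ∈ F p, ∀ y ∈ F p, |sarea x y| ≤ η := by
    intro p x hx y hy
    rw [hFmem] at hx hy
    obtain ⟨hxA, hx1, hx2⟩ := hx
    obtain ⟨hyA, hy1, hy2⟩ := hy
    exact sarea_small hηpos hxA.1 hxA.2 hyA.1 hyA.2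
      (floor_close hηpos (hx1.trans hy1.symm)) (floor_close hηpos (hx2.trans hy2.symm))
  have hfar : ∀ p q : ℤ × ℤ, (2 ≤ |p.1 - q.1| ∨ 2 ≤ |p.2 - q.2|) →
      ∀ x ∈ F p, ∀ y ∈ F q, η/8 ≤ |sarea x y| := by
    intro p q hpq x hx y hy
    rw [hFmem] at hx hy
    obtain ⟨hxA, hx1, hx2⟩ := hx
    obtain ⟨hyA, hy1, hy2⟩ := hy
    refine sarea_big hηpos hxA.1 hxA.2 hyA.1 hyA.2 ?_
    rcases hpq with h | h
    · exact Or.inl (floor_far hηpos hx1 hy1 h)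
    · exact Or.inr (floor_far hηpos hx2 hy2 h)
  have hFbound : ∀ p : ℤ × ℤ, μ (F p) ≤ ENNReal.ofReal εr := by
    intro p
    have hann : ∀ x ∈ F p, 1/2 ≤ ‖x‖ ∧ ‖x‖ ≤ 1 := fun x hx => ((hFmem p x).mp hx).1
    obtain ⟨c, hc⟩ := cell_cover hηpos hann (hclose p)
    have h1 : μ (F p) ≤ ∑ j ∈ Finset.range (⌈1/η⌉₊+1), μ (Metric.closedBall (c j) (3*η)) :=
      le_trans (measure_mono hc) (measure_biUnion_finset_le _ _)
    have h2 : ∑ j ∈ Finset.range (⌈1/η⌉₊+1), μ (Metric.closedBall (c j) (3*η))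
        ≤ ∑ _j ∈ Finset.range (⌈1/η⌉₊+1), ENNReal.ofReal (C*(3*η)^s) :=
      Finset.sum_le_sum (fun j _ => hfrost _ _ (by positivity))
    have h3 : ∑ _j ∈ Finset.range (⌈1/η⌉₊+1), ENNReal.ofReal (C*(3*η)^s)
        = ((⌈1/η⌉₊+1 : ℕ) : ℝ≥0∞) * ENNReal.ofReal (C*(3*η)^s) := by
      rw [Finset.sum_const, Finset.card_range, nsmul_eq_mul]
    have h4 : ((⌈1/η⌉₊+1 : ℕ) : ℝ≥0∞) * ENNReal.ofReal (C*(3*η)^s)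
        = ENNReal.ofReal (((⌈1/η⌉₊+1 : ℕ) : ℝ) * (C*(3*η)^s)) := by
      rw [← ENNReal.ofReal_natCast (⌈1/η⌉₊+1), ← ENNReal.ofReal_mul (by positivity)]
    have h5 : ENNReal.ofReal (((⌈1/η⌉₊+1 : ℕ) : ℝ) * (C*(3*η)^s)) ≤ ENNReal.ofReal εr :=
      ENNReal.ofReal_le_ofReal (cover_arith hs' hC hεr hE0 hηpos hη1 hηE)
    exact le_trans h1 (le_trans h2 (le_of_eq h3 |>.trans (le_of_eq h4 |>.trans h5)))
  obtain ⟨m, hmdef⟩ : ∃ m : ℤ, m = ⌈1/η⌉ := ⟨_, rfl⟩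
  have hm1 : (1:ℝ)/η ≤ (m:ℝ) := by rw [hmdef]; exact_mod_cast Int.le_ceil _
  have hkey : ∀ t : ℝ, |t| ≤ 1 → -m ≤ ⌊t/η⌋ ∧ ⌊t/η⌋ ≤ m := by
    intro t ht
    rw [abs_le] at ht
    have hinv : (1/η)*η = 1 := by field_simp
    constructor
    · rw [Int.le_floor]
      push_cast
      rw [le_div_iff₀ hηpos]
      nlinarith [hm1, hηpos, ht.1, hinv]
    · have hf1 : (⌊t/η⌋:ℝ) ≤ t/η := Int.floor_le _
      have hf2 : t/η ≤ 1/η := by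
        rw [div_le_div_iff₀ hηpos hηpos]
        nlinarith [ht.2, hηpos]
      exact_mod_cast hf1.trans (hf2.trans hm1)
  have hcov : 1 ≤ μ (⋃ p ∈ (Finset.Icc (-m) m ×ˢ Finset.Icc (-m) m), F p) := by
    rw [← hμA]
    apply measure_mono
    intro x hx
    have hxann : 1/2 ≤ ‖x‖ ∧ ‖x‖ ≤ 1 := hx
    have hb1 := hkey (u1f x) (u1f_abs_le hxann.1 hxann.2)
    have hb2 := hkey (u2f x) (u2f_abs_le hxann.1 hxann.2)
    have hpP : ((⌊u1f x/η⌋, ⌊u2f x/η⌋) : ℤ×ℤ) ∈ Finset.Icc (-m) m ×ˢ Finset.Icc (-m) m := by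
      rw [Finset.mem_product, Finset.mem_Icc, Finset.mem_Icc]
      exact ⟨⟨hb1.1, hb1.2⟩, hb2.1, hb2.2⟩
    have hxF : x ∈ F (⌊u1f x/η⌋, ⌊u2f x/η⌋) := (hFmem _ x).mpr ⟨hxann, rfl, rfl⟩
    exact Set.mem_biUnion hpP hxF
  have hsmall : 9 * ((k+1 : ℕ) : ℝ≥0∞) * ENNReal.ofReal εr < 1 := by
    have h99 : (9:ℝ≥0∞) * ((k+1 : ℕ) : ℝ≥0∞) * ENNReal.ofReal εr
        = ENNReal.ofReal (9 * ((k+1 : ℕ) : ℝ) * εr) := by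
      rw [← ENNReal.ofReal_natCast (k+1),
        show (9:ℝ≥0∞) = ENNReal.ofReal (9:ℝ) by norm_num,
        ← ENNReal.ofReal_mul (by norm_num), ← ENNReal.ofReal_mul (by positivity)]
    rw [h99]
    refine ENNReal.ofReal_lt_one.mpr ?_
    rw [hεrdef]
    push_cast
    have hkp : ((k:ℝ)+1) ≠ 0 := by positivity
    have heq : 9 * ((k:ℝ)+1) * (1/(10*((k:ℝ)+1))) = 9/10 := by field_simp
    rw [heq]; norm_num
  obtain ⟨c, hcpos, hcfar⟩ := greedy μ F (Finset.Icc (-m) m ×ˢ Finset.Icc (-m) m)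
    (ENNReal.ofReal εr) hFbound hcov (k+1) hsmall
  exact ⟨fun i => F (c i), fun i => hFmeas _, fun i => hcpos i,
    fun i j hij x hx y hy => hfar (c i) (c j) (hcfar i j hij) x hx y hy⟩
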